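/- Let x₁, y₁, x₂, y₂ ∈ ℝ with x₁ < x₂ and Δ > 0, set D := √((x₂−x₁)² + (y₂−y₁)²) and assume D > 2Δ. Let θ := arctan((y₂−y₁)/(x₂−x₁)) and α := arcsin(2Δ/D). (i) If θ + α < π/2, then for m := tan(θ+α) and q := (y₁ + y₂ − m·(x₁ + x₂))/2 one has |y₁ − m·x₁ − q| = Δ·√(1+m²) and |y₂ − m·x₂ − q| = Δ·√(1+m²). (ii) If θ − α > −π/2, then the same two equalities hold for m := tan(θ−α) and q := (y₁ + y₂ − m·(x₁ + x₂))/2. In other words, each of the two lines through the midpoint of the two points with slope tan(θ±α) is at distance exactly Δ from both (x₁,y₁) and (x₂,y₂). -/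

import Mathlib

open Real

lemma tangent_helper (Δ D dx dy θ β : ℝ) (hΔ : 0 < Δ) (hD : 0 < D)
    (hcos : Real.cos θ = dx / D) (hsin : Real.sin θ = dy / D)
    (hβ : 0 < Real.cos β)
    (hs : |Real.sin (β - θ)| = 2 * Δ / D) :
    |Real.tan β * dx - dy| / 2 = Δ * Real.sqrt (1 + Real.tan β ^ 2) := by
  have hsq : Real.sqrt (1 + Real.tan β ^ 2) = 1 / Real.cos β := by
    rw [one_div, ← Real.inv_sqrt_one_add_tan_sq hβ, inv_inv]
  have hkey : |Real.sin β * dx - Real.cos β * dy| = 2 * Δ := by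
    have hdx : dx = D * Real.cos θ := by rw [hcos]; field_simp
    have hdy : dy = D * Real.sin θ := by rw [hsin]; field_simp
    rw [hdx, hdy]
    have : Real.sin β * (D * Real.cos θ) - Real.cos β * (D * Real.sin θ)
        = D * Real.sin (β - θ) := by rw [Real.sin_sub]; ring
    rw [this, abs_mul, abs_of_pos hD, hs]
    field_simp
  have htan : Real.tan β * dx - dy = (Real.sin β * dx - Real.cos β * dy) / Real.cos β := by
    rw [Real.tan_eq_sin_div_cos]; field_simp
  rw [htan, abs_div, abs_of_pos hβ, hkey, hsq]
  field_simp

/-- **Internal tangents (Lemma 1, Case 2, Appendix C).** For two points `(x₁,y₁)`, `(x₂,y₂)` at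
distance `D > 2Δ` with `x₁ < x₂`, each of the two lines through their midpoint with slope
`tan(θ ± α)` (where `θ = arctan((y₂-y₁)/(x₂-x₁))`, `α = arcsin(2Δ/D)`) is at distance exactly
`Δ` from both points. -/
theorem internal_tangent_lines (x₁ y₁ x₂ y₂ Δ : ℝ) (hΔ : 0 < Δ) (hx : x₁ < x₂)
    (D : ℝ) (hD : D = Real.sqrt ((x₂ - x₁) ^ 2 + (y₂ - y₁) ^ 2)) (hD2 : D > 2 * Δ)
    (θ α : ℝ) (hθ : θ = Real.arctan ((y₂ - y₁) / (x₂ - x₁)))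
    (hα : α = Real.arcsin (2 * Δ / D)) :
    (θ + α < π / 2 →
      |y₁ - Real.tan (θ + α) * x₁ -
          (y₁ + y₂ - Real.tan (θ + α) * (x₁ + x₂)) / 2| =
        Δ * Real.sqrt (1 + Real.tan (θ + α) ^ 2) ∧
      |y₂ - Real.tan (θ + α) * x₂ -
          (y₁ + y₂ - Real.tan (θ + α) * (x₁ + x₂)) / 2| =
        Δ * Real.sqrt (1 + Real.tan (θ + α) ^ 2)) ∧
    (θ - α > -(π / 2) →
      |y₁ - Real.tan (θ - α) * x₁ -
          (y₁ + y₂ - Real.tan (θ - α) * (x₁ + x₂)) / 2| =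
        Δ * Real.sqrt (1 + Real.tan (θ - α) ^ 2) ∧
      |y₂ - Real.tan (θ - α) * x₂ -
          (y₁ + y₂ - Real.tan (θ - α) * (x₁ + x₂)) / 2| =
        Δ * Real.sqrt (1 + Real.tan (θ - α) ^ 2)) := by
  set dx := x₂ - x₁ with hdx_def
  set dy := y₂ - y₁ with hdy_def
  have hdx : 0 < dx := by simp [hdx_def]; linarith
  have hDpos : 0 < D := lt_trans (by linarith) hD2
  have hratio0 : 0 ≤ 2 * Δ / D := by positivity
  have hratio1 : 2 * Δ / D ≤ 1 := by
    rw [div_le_one hDpos]; linarith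
  -- D = dx * √(1 + (dy/dx)^2)
  have hDeq : D = dx * Real.sqrt (1 + (dy / dx) ^ 2) := by
    rw [hD]
    rw [show (x₂ - x₁) ^ 2 + (y₂ - y₁) ^ 2 = dx ^ 2 * (1 + (dy / dx) ^ 2) by
      field_simp; rfl]
    rw [Real.sqrt_mul (by positivity), Real.sqrt_sq hdx.le]
  have hsqrt_pos : 0 < Real.sqrt (1 + (dy / dx) ^ 2) := by positivity
  have hcosθ : Real.cos θ = dx / D := by
    rw [hθ, Real.cos_arctan, hDeq]; field_simp
  have hsinθ : Real.sin θ = dy / D := by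
    rw [hθ, Real.sin_arctan, hDeq]; field_simp
  have hsinα : Real.sin α = 2 * Δ / D := by
    rw [hα, Real.sin_arcsin (by linarith) hratio1]
  have hαnn : 0 ≤ α := by rw [hα]; exact Real.arcsin_nonneg.mpr hratio0
  have hθlo : -(π / 2) < θ := by rw [hθ]; exact Real.neg_pi_div_two_lt_arctan _
  have hθhi : θ < π / 2 := by rw [hθ]; exact Real.arctan_lt_pi_div_two _
  have habs : ∀ m : ℝ,
      y₁ - m * x₁ - (y₁ + y₂ - m * (x₁ + x₂)) / 2 = (m * dx - dy) / 2 ∧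
      y₂ - m * x₂ - (y₁ + y₂ - m * (x₁ + x₂)) / 2 = -((m * dx - dy) / 2) := by
    intro m; constructor <;> (simp only [hdx_def, hdy_def]; ring)
  constructor
  · intro hlt
    have hβ : 0 < Real.cos (θ + α) :=
      Real.cos_pos_of_mem_Ioo ⟨by linarith, hlt⟩
    have hs : |Real.sin (θ + α - θ)| = 2 * Δ / D := by
      simp only [add_sub_cancel_left, hsinα]
      exact abs_of_nonneg hratio0
    have key := tangent_helper Δ D dx dy θ (θ + α) hΔ hDpos hcosθ hsinθ hβ hs
    obtain ⟨h1, h2⟩ := habs (Real.tan (θ + α))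
    rw [h1, h2, abs_neg, abs_div, abs_two] at *
    exact ⟨key, key⟩
  · intro hgt
    have hβ : 0 < Real.cos (θ - α) :=
      Real.cos_pos_of_mem_Ioo ⟨hgt, by linarith⟩
    have hs : |Real.sin (θ - α - θ)| = 2 * Δ / D := by
      have : θ - α - θ = -α := by ring
      rw [this, Real.sin_neg, abs_neg, hsinα]
      exact abs_of_nonneg hratio0
    have key := tangent_helper Δ D dx dy θ (θ - α) hΔ hDpos hcosθ hsinθ hβ hs
    obtain ⟨h1, h2⟩ := habs (Real.tan (θ - α))
    rw [h1, h2, abs_neg, abs_div, abs_two] at *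
    exact ⟨key, key⟩
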